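/- Let (Φ, F+η) be a generalized almost contact pair on V. Then L := ℂ·F ⊕ E^{1,0} and L* := ℂ·η ⊕ E^{0,1} are both maximally isotropic subspaces of (V⊕V*)_ℂ with respect to the pairing, i.e. each is isotropic of complex dimension equal to dim V. -/

import Mathlib

set_option maxHeartbeats 4000000

open TensorProduct

/-- Evaluation `(X,α) ↦ η(X)` on the double `V ⊕ V*`. -/
noncomputable def gcEta {V : Type*} [AddCommGroup V] [Module ℝ V] (η : (V →ₗ[ℝ] ℝ)) :
    (V × (V →ₗ[ℝ] ℝ)) →ₗ[ℝ] ℝ :=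
  η.comp (LinearMap.fst ℝ V ((V →ₗ[ℝ] ℝ)))

/-- Evaluation `(X,α) ↦ α(F)` on the double `V ⊕ V*`. -/
noncomputable def gcF {V : Type*} [AddCommGroup V] [Module ℝ V] (F : V) :
    (V × (V →ₗ[ℝ] ℝ)) →ₗ[ℝ] ℝ :=
  (LinearMap.applyₗ F).comp (LinearMap.snd ℝ V ((V →ₗ[ℝ] ℝ)))

/-- The complexification of `ker η ⊕ ker F` inside `(V ⊕ V*) ⊗ ℂ`. -/
noncomputable def gcKerC {V : Type*} [AddCommGroup V] [Module ℝ V]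
    (F : V) (η : (V →ₗ[ℝ] ℝ)) : Submodule ℂ (ℂ ⊗[ℝ] (V × (V →ₗ[ℝ] ℝ))) :=
  (LinearMap.ker (gcEta η) ⊓ LinearMap.ker (gcF F)).baseChange ℂ

/-- The map `e ↦ e − iΦ(e)` on the complexified double. -/
noncomputable def gcProj10 {V : Type*} [AddCommGroup V] [Module ℝ V]
    (Φ : (V × (V →ₗ[ℝ] ℝ)) →ₗ[ℝ] (V × (V →ₗ[ℝ] ℝ))) :
    (ℂ ⊗[ℝ] (V × (V →ₗ[ℝ] ℝ))) →ₗ[ℂ] (ℂ ⊗[ℝ] (V × (V →ₗ[ℝ] ℝ))) :=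
  (LinearMap.id : (ℂ ⊗[ℝ] (V × (V →ₗ[ℝ] ℝ))) →ₗ[ℂ] ℂ ⊗[ℝ] (V × (V →ₗ[ℝ] ℝ))) -
    Complex.I • (Φ.baseChange ℂ)

/-- The map `e ↦ e + iΦ(e)` on the complexified double. -/
noncomputable def gcProj01 {V : Type*} [AddCommGroup V] [Module ℝ V]
    (Φ : (V × (V →ₗ[ℝ] ℝ)) →ₗ[ℝ] (V × (V →ₗ[ℝ] ℝ))) :
    (ℂ ⊗[ℝ] (V × (V →ₗ[ℝ] ℝ))) →ₗ[ℂ] (ℂ ⊗[ℝ] (V × (V →ₗ[ℝ] ℝ))) :=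
  (LinearMap.id : (ℂ ⊗[ℝ] (V × (V →ₗ[ℝ] ℝ))) →ₗ[ℂ] ℂ ⊗[ℝ] (V × (V →ₗ[ℝ] ℝ))) +
    Complex.I • (Φ.baseChange ℂ)

/-- `E^{1,0} = { e − iΦ(e) : e ∈ (ker η ⊕ ker F)_ℂ }`. -/
noncomputable def gcE10 {V : Type*} [AddCommGroup V] [Module ℝ V]
    (Φ : (V × (V →ₗ[ℝ] ℝ)) →ₗ[ℝ] (V × (V →ₗ[ℝ] ℝ))) (F : V) (η : (V →ₗ[ℝ] ℝ)) :
    Submodule ℂ (ℂ ⊗[ℝ] (V × (V →ₗ[ℝ] ℝ))) :=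
  Submodule.map (gcProj10 Φ) (gcKerC F η)

/-- `E^{0,1} = { e + iΦ(e) : e ∈ (ker η ⊕ ker F)_ℂ }`. -/
noncomputable def gcE01 {V : Type*} [AddCommGroup V] [Module ℝ V]
    (Φ : (V × (V →ₗ[ℝ] ℝ)) →ₗ[ℝ] (V × (V →ₗ[ℝ] ℝ))) (F : V) (η : (V →ₗ[ℝ] ℝ)) :
    Submodule ℂ (ℂ ⊗[ℝ] (V × (V →ₗ[ℝ] ℝ))) :=
  Submodule.map (gcProj01 Φ) (gcKerC F η)

section gcAux

variable {V : Type*} [AddCommGroup V] [Module ℝ V]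

local notation "W" => V × (V →ₗ[ℝ] ℝ)

/-- A `ℂ`-linear functional on the complexified double induced by a real functional. -/
private noncomputable def gcTheta (g : W →ₗ[ℝ] ℝ) : (ℂ ⊗[ℝ] W) →ₗ[ℂ] ℂ :=
  (TensorProduct.AlgebraTensorModule.rid ℝ ℂ ℂ).toLinearMap.comp (g.baseChange ℂ)

private lemma gcTheta_tmul (g : W →ₗ[ℝ] ℝ) (z : ℂ) (w : W) :
    gcTheta g (z ⊗ₜ[ℝ] w) = g w • z := by
  simp [gcTheta, LinearMap.baseChange_tmul]

/-- The real-part retraction of the complexified double. -/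
private noncomputable def gcRho : (ℂ ⊗[ℝ] W) →ₗ[ℝ] W :=
  (TensorProduct.lid ℝ W).toLinearMap.comp (LinearMap.rTensor W Complex.reLm)

private lemma gcRho_tmul (z : ℂ) (w : W) : gcRho (z ⊗ₜ[ℝ] w) = z.re • w := by
  simp [gcRho]

private theorem gc_main [FiniteDimensional ℝ V]
    (n : ℕ) (hdim : Module.finrank ℝ V = 2 * n + 1)
    (B : LinearMap.BilinForm ℝ W)
    (hB : ∀ u v : W, B u v = (v.2 u.1 + u.2 v.1) / 2)
    (Φ : W →ₗ[ℝ] W)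
    (hskew : ∀ u v : W, B (Φ u) v + B u (Φ v) = 0)
    (F : V) (η : (V →ₗ[ℝ] ℝ)) (hηF : η F = 1)
    (hΦF : Φ (F, 0) = 0) (hΦη : Φ (0, η) = 0)
    (hΦ2 : ∀ u : W, Φ (Φ u) = -u + (η u.1 • F, u.2 F • η))
    (c : ℂ) (hc : c * c = -1) (hcre : c.re = 0)
    (x : W) (g : W →ₗ[ℝ] ℝ)
    (hΦx : Φ x = 0) (hgx : g x = 1)
    (hgK : ∀ e ∈ LinearMap.ker (gcEta η) ⊓ LinearMap.ker (gcF F), g e = 0)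
    (hBxx : B x x = 0)
    (hBxK : ∀ e ∈ LinearMap.ker (gcEta η) ⊓ LinearMap.ker (gcF F), B x e = 0)
    (L : Submodule ℂ (ℂ ⊗[ℝ] W))
    (hL : L = Submodule.span ℂ {(1 : ℂ) ⊗ₜ[ℝ] x} ⊔
      Submodule.map ((LinearMap.id : (ℂ ⊗[ℝ] W) →ₗ[ℂ] ℂ ⊗[ℝ] W) - c • Φ.baseChange ℂ)
        (gcKerC F η)) :
    (∀ u ∈ L, ∀ v ∈ L, (LinearMap.BilinForm.baseChange ℂ B) u v = 0) ∧
      Module.finrank ℂ L = Module.finrank ℝ V := by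
  classical
  set K : Submodule ℝ W := LinearMap.ker (gcEta η) ⊓ LinearMap.ker (gcF F) with hKdef
  set P : (ℂ ⊗[ℝ] W) →ₗ[ℂ] ℂ ⊗[ℝ] W :=
    (LinearMap.id : (ℂ ⊗[ℝ] W) →ₗ[ℂ] ℂ ⊗[ℝ] W) - c • Φ.baseChange ℂ with hPdef
  set Bc := LinearMap.BilinForm.baseChange ℂ B with hBcdef
  -- membership in K
  have hmemK : ∀ e : W, e ∈ K ↔ η e.1 = 0 ∧ e.2 F = 0 := by
    intro e
    simp [hKdef, Submodule.mem_inf, LinearMap.mem_ker, gcEta, gcF]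
  -- symmetry of B
  have hBsym : ∀ u v : W, B u v = B v u := by
    intro u v; rw [hB, hB]; ring
  -- Φ maps everything into K
  have hΦK : ∀ u : W, Φ u ∈ K := by
    intro u
    rw [hmemK]
    constructor
    · have h := hskew u (0, η)
      rw [hΦη, (B u).map_zero, add_zero, hB] at h
      simpa using h
    · have h := hskew u (F, 0)
      rw [hΦF, (B u).map_zero, add_zero, hB] at h
      simpa using h
  -- Φ² = -1 on K
  have hΦ2K : ∀ e : W, e ∈ K → Φ (Φ e) = -e := by
    intro e he
    rw [hmemK] at he
    rw [hΦ2, he.1, he.2]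
    simp
  -- B(Φe, Φf) = B(e,f) for e ∈ K
  have hBΦΦ : ∀ e ∈ K, ∀ f : W, B (Φ e) (Φ f) = B e f := by
    intro e he f
    have h := hskew (Φ e) f
    rw [hΦ2K e he] at h
    have h2 : B (-e) f = -B e f := by simp
    rw [h2] at h
    linarith
  -- projection formula on simple tensors
  have hP1 : ∀ e : W, P ((1 : ℂ) ⊗ₜ[ℝ] e) = (1 : ℂ) ⊗ₜ[ℝ] e - c ⊗ₜ[ℝ] (Φ e) := by
    intro e
    simp [hPdef, LinearMap.sub_apply, LinearMap.baseChange_tmul, smul_tmul']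
  -- base-changed bilinear form on simple tensors
  have hBcT : ∀ (a b : ℂ) (u v : W), Bc (a ⊗ₜ[ℝ] u) (b ⊗ₜ[ℝ] v) = B u v • (a * b) := by
    intro a b u v; simp [hBcdef]
  -- generator set
  set S : Set (ℂ ⊗[ℝ] W) :=
    insert ((1 : ℂ) ⊗ₜ[ℝ] x) ((fun e : W => P ((1 : ℂ) ⊗ₜ[ℝ] e)) '' (K : Set W)) with hSdef
  -- L is the span of S
  have hKC : gcKerC F η = Submodule.span ℂ ((TensorProduct.mk ℝ ℂ W 1) '' (K : Set W)) := by
    rw [gcKerC, ← hKdef, Submodule.baseChange_eq_span, Submodule.map_coe]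
  have hmapP : Submodule.map P (gcKerC F η) =
      Submodule.span ℂ ((fun e : W => P ((1 : ℂ) ⊗ₜ[ℝ] e)) '' (K : Set W)) := by
    rw [hKC, Submodule.map_span, Set.image_image]
    simp [TensorProduct.mk_apply]
  have hLspan : L = Submodule.span ℂ S := by
    rw [hL, hSdef, Submodule.span_insert, hmapP]
  clear_value S
  -- pairwise orthogonality of generators
  have hgen : ∀ p ∈ S, ∀ q ∈ S, Bc p q = 0 := by
    have key2 : ∀ e ∈ K, Bc ((1 : ℂ) ⊗ₜ[ℝ] x) (P ((1 : ℂ) ⊗ₜ[ℝ] e)) = 0 := by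
      intro e he
      rw [hP1, map_sub, hBcT, hBcT, hBxK e he, hBxK (Φ e) (hΦK e)]
      simp
    have key3 : ∀ e ∈ K, Bc (P ((1 : ℂ) ⊗ₜ[ℝ] e)) ((1 : ℂ) ⊗ₜ[ℝ] x) = 0 := by
      intro e he
      rw [hP1]
      simp only [map_sub, LinearMap.sub_apply]
      rw [hBcT, hBcT, hBsym e x, hBsym (Φ e) x, hBxK e he, hBxK (Φ e) (hΦK e)]
      simp
    have key4 : ∀ e ∈ K, ∀ f ∈ K, Bc (P ((1 : ℂ) ⊗ₜ[ℝ] e)) (P ((1 : ℂ) ⊗ₜ[ℝ] f)) = 0 := by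
      intro e he f hf
      rw [hP1, hP1]
      simp only [map_sub, LinearMap.sub_apply]
      rw [hBcT, hBcT, hBcT, hBcT, hBΦΦ e he f, hc]
      have h := hskew e f
      have h2 : B e (Φ f) = -B (Φ e) f := by linarith
      rw [h2, one_mul, mul_one, one_mul]
      module
    rintro p hp q hq
    rw [hSdef] at hp hq
    rcases hp with rfl | ⟨e, he, rfl⟩
    · rcases hq with rfl | ⟨f, hf, rfl⟩
      · rw [hBcT, hBxx]; simp
      · exact key2 f hf
    · rcases hq with rfl | ⟨f, hf, rfl⟩
      · exact key3 e he
      · exact key4 e he f hf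
  -- isotropy
  have hiso : ∀ u ∈ L, ∀ v ∈ L, Bc u v = 0 := by
    have step1 : ∀ p ∈ S, ∀ q ∈ L, Bc p q = 0 := by
      intro p hp
      have hle : L ≤ LinearMap.ker (Bc p) := by
        rw [hLspan, Submodule.span_le]
        intro q hq
        exact LinearMap.mem_ker.mpr (hgen p hp q hq)
      intro q hq
      exact LinearMap.mem_ker.mp (hle hq)
    intro u hu v hv
    have hle : L ≤ LinearMap.ker (Bc.flip v) := by
      rw [hLspan, Submodule.span_le]
      intro p hp
      exact LinearMap.mem_ker.mpr (step1 p hp v hv)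
    exact LinearMap.mem_ker.mp (hle hu)
  refine ⟨hiso, ?_⟩
  -- dimension count
  -- the functional θ kills the image part and is 1 on the distinguished generator
  have hθx : gcTheta g ((1 : ℂ) ⊗ₜ[ℝ] x) = 1 := by
    rw [gcTheta_tmul, hgx]; simp
  have hθK : ∀ u ∈ gcKerC F η, gcTheta g u = 0 := by
    have hle : gcKerC F η ≤ LinearMap.ker (gcTheta g) := by
      rw [hKC, Submodule.span_le]
      rintro - ⟨e, he, rfl⟩
      rw [SetLike.mem_coe, LinearMap.mem_ker, TensorProduct.mk_apply, gcTheta_tmul,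
        hgK e he]
      simp
    intro u hu
    exact LinearMap.mem_ker.mp (hle hu)
  have hΦcK : ∀ u : ℂ ⊗[ℝ] W, Φ.baseChange ℂ u ∈ gcKerC F η := by
    intro u
    induction u using TensorProduct.induction_on with
    | zero => simp
    | tmul z w =>
      rw [LinearMap.baseChange_tmul]
      exact Submodule.tmul_mem_baseChange_of_mem z (hΦK w)
    | add a b ha hb => rw [map_add]; exact add_mem ha hb
  have hθE : ∀ u ∈ Submodule.map P (gcKerC F η), gcTheta g u = 0 := by
    rintro - ⟨u, hu, rfl⟩
    rw [hPdef]
    simp only [LinearMap.sub_apply, LinearMap.id_apply, LinearMap.smul_apply, map_sub, map_smul]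
    rw [hθK u hu, hθK _ (hΦcK u)]
    simp
  have hx0 : ((1 : ℂ) ⊗ₜ[ℝ] x : ℂ ⊗[ℝ] W) ≠ 0 := by
    intro h
    have := hθx
    rw [h, map_zero] at this
    exact one_ne_zero this.symm
  -- trivial intersection
  have hinf : Submodule.span ℂ {(1 : ℂ) ⊗ₜ[ℝ] x} ⊓ Submodule.map P (gcKerC F η) = ⊥ := by
    rw [Submodule.eq_bot_iff]
    rintro u ⟨hu1, hu2⟩
    obtain ⟨z, rfl⟩ := Submodule.mem_span_singleton.mp hu1
    have h0 := hθE _ hu2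
    rw [map_smul, hθx, smul_eq_mul, mul_one] at h0
    rw [h0, zero_smul]
  haveI : FiniteDimensional ℝ W := inferInstance
  haveI : Module.Finite ℂ (ℂ ⊗[ℝ] W) := inferInstance
  haveI : Module.Finite ℝ (ℂ ⊗[ℝ] W) := Module.Finite.trans ℂ (ℂ ⊗[ℝ] W)
  -- finrank of K
  have hrkK : Module.finrank ℝ K = 4 * n := by
    set φ : W →ₗ[ℝ] ℝ × ℝ := (gcEta η).prod (gcF F) with hφdef
    have hkerφ : LinearMap.ker φ = K := by
      ext u
      simp [hφdef, LinearMap.mem_ker, LinearMap.prod_apply, Prod.ext_iff, hKdef,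
        Submodule.mem_inf]
    have hrange : LinearMap.range φ = ⊤ := by
      rw [eq_top_iff]
      rintro ⟨a, b⟩ -
      refine ⟨a • ((F, 0) : W) + b • ((0, η) : W), ?_⟩
      simp [hφdef, LinearMap.prod_apply, gcEta, gcF, hηF, Prod.ext_iff]
    have h4 := LinearMap.finrank_range_add_finrank_ker φ
    rw [hrange, hkerφ, finrank_top] at h4
    have hRR : Module.finrank ℝ (ℝ × ℝ) = 2 := by
      rw [Module.finrank_prod, Module.finrank_self]
    have hW : Module.finrank ℝ W = 4 * n + 2 := by
      rw [Module.finrank_prod, Module.finrank_linearMap, Module.finrank_self, mul_one, hdim]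
      ring
    rw [hRR, hW] at h4
    omega
  -- c = ± i facts
  have him : c.im * c.im = 1 := by
    have h := congrArg Complex.re hc
    simp [Complex.mul_re, hcre] at h
    linarith
  have hsp : ∀ z : ℂ, z = algebraMap ℝ ℂ z.re + algebraMap ℝ ℂ (z.im * c.im) * c := by
    intro z
    apply Complex.ext <;>
      simp [Complex.mul_re, Complex.mul_im, hcre, mul_assoc, him]
  -- the ℝ-linear parametrization of the image part
  set ψ : K →ₗ[ℝ] (ℂ ⊗[ℝ] W) :=
    (P.restrictScalars ℝ).comp ((TensorProduct.mk ℝ ℂ W 1).comp K.subtype) with hψdef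
  have hψap : ∀ e : K, ψ e = P ((1 : ℂ) ⊗ₜ[ℝ] (e : W)) := by intro e; rfl
  have hρψ : ∀ e : K, gcRho (ψ e) = (e : W) := by
    intro e
    rw [hψap, hP1, map_sub, gcRho_tmul, gcRho_tmul, hcre]
    simp
  have hψinj : Function.Injective ψ := by
    intro a b hab
    have h := congrArg gcRho hab
    rw [hρψ, hρψ] at h
    exact Subtype.ext h
  have hψΦ : ∀ e : K, c • ψ e = ψ ⟨Φ e, hΦK e⟩ := by
    intro e
    rw [hψap, hψap, hP1, hP1, smul_sub, smul_tmul', smul_tmul', smul_eq_mul, smul_eq_mul,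
      mul_one, hc]
    have h2 : Φ (Φ (e : W)) = -(e : W) := hΦ2K _ e.2
    show c ⊗ₜ[ℝ] (e : W) - (-1 : ℂ) ⊗ₜ[ℝ] Φ (e : W) =
      1 ⊗ₜ[ℝ] Φ (e : W) - c ⊗ₜ[ℝ] Φ (Φ (e : W))
    rw [h2, tmul_neg, neg_tmul]
    abel
  -- the image as ℂ-submodule
  set E : Submodule ℂ (ℂ ⊗[ℝ] W) :=
    { carrier := Set.range ψ
      add_mem' := by rintro _ _ ⟨a, rfl⟩ ⟨b, rfl⟩; exact ⟨a + b, map_add ψ a b⟩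
      zero_mem' := ⟨0, map_zero ψ⟩
      smul_mem' := by
        rintro z _ ⟨a, rfl⟩
        refine ⟨z.re • a + (z.im * c.im) • ⟨Φ (a : W), hΦK (a : W)⟩, ?_⟩
        rw [map_add, map_smul, map_smul, ← hψΦ a]
        conv_rhs => rw [hsp z]
        rw [add_smul, algebraMap_smul, mul_smul ((algebraMap ℝ ℂ) (z.im * c.im)) c (ψ a),
          algebraMap_smul] } with hEdef
  have hEeq : Submodule.map P (gcKerC F η) = E := by
    apply le_antisymm
    · rw [hmapP, Submodule.span_le]
      rintro - ⟨e, he, rfl⟩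
      exact ⟨⟨e, he⟩, rfl⟩
    · rintro - ⟨a, rfl⟩
      exact ⟨(1 : ℂ) ⊗ₜ[ℝ] (a : W),
        Submodule.tmul_mem_baseChange_of_mem 1 a.2, (hψap a).symm⟩
  -- finrank of E over ℝ and ℂ
  have h1 : Submodule.restrictScalars ℝ E = LinearMap.range ψ := by
    ext u
    constructor
    · intro hu; exact hu
    · intro hu; exact hu
  clear_value E
  clear_value ψ
  clear_value P
  have hrE : Module.finrank ℝ E = 4 * n := by
    have h2 : Module.finrank ℝ E = Module.finrank ℝ (Submodule.restrictScalars ℝ E) :=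
      (LinearEquiv.finrank_eq
        ((Submodule.restrictScalarsEquiv ℝ ℂ (ℂ ⊗[ℝ] W) E).restrictScalars ℝ)).symm
    rw [h2, h1, LinearMap.finrank_range_of_inj hψinj, hrkK]
  have hcE : Module.finrank ℂ E = 2 * n := by
    haveI : Module.Free ℂ E := Module.Free.of_divisionRing ℂ E
    have h3 := Module.finrank_mul_finrank ℝ ℂ E
    rw [Complex.finrank_real_complex, hrE] at h3
    omega
  -- conclude
  have h5 := Submodule.finrank_sup_add_finrank_inf_eq
    (Submodule.span ℂ {(1 : ℂ) ⊗ₜ[ℝ] x}) (Submodule.map P (gcKerC F η))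
  rw [hinf, finrank_bot, finrank_span_singleton hx0, hEeq, hcE] at h5
  rw [hL, hEeq, hdim]
  omega

end gcAux

theorem stmt3 (V : Type*) [AddCommGroup V] [Module ℝ V] [FiniteDimensional ℝ V]
    (n : ℕ) (hdim : Module.finrank ℝ V = 2 * n + 1)
    (B : LinearMap.BilinForm ℝ (V × (V →ₗ[ℝ] ℝ)))
    (hB : ∀ u v : V × (V →ₗ[ℝ] ℝ), B u v = (v.2 u.1 + u.2 v.1) / 2)
    (Φ : (V × (V →ₗ[ℝ] ℝ)) →ₗ[ℝ] (V × (V →ₗ[ℝ] ℝ)))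
    (hskew : ∀ u v : V × (V →ₗ[ℝ] ℝ), B (Φ u) v + B u (Φ v) = 0)
    (F : V) (η : (V →ₗ[ℝ] ℝ))
    (hηF : η F = 1)
    (hΦF : Φ (F, 0) = 0)
    (hΦη : Φ (0, η) = 0)
    (hΦ2 : ∀ u : V × (V →ₗ[ℝ] ℝ), Φ (Φ u) = -u + (η u.1 • F, u.2 F • η)) :
    ∀ L : Submodule ℂ (ℂ ⊗[ℝ] (V × (V →ₗ[ℝ] ℝ))),
      (L = (Submodule.span ℂ {(1 : ℂ) ⊗ₜ[ℝ] ((F, 0) : V × (V →ₗ[ℝ] ℝ))} ⊔ gcE10 Φ F η) ∨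
       L = (Submodule.span ℂ {(1 : ℂ) ⊗ₜ[ℝ] ((0, η) : V × (V →ₗ[ℝ] ℝ))} ⊔ gcE01 Φ F η)) →
      (∀ u ∈ L, ∀ v ∈ L, (LinearMap.BilinForm.baseChange ℂ B) u v = 0) ∧
        Module.finrank ℂ L = Module.finrank ℝ V := by
  intro L hL
  rcases hL with h | h
  · refine gc_main n hdim B hB Φ hskew F η hηF hΦF hΦη hΦ2 Complex.I
      (by rw [Complex.I_mul_I]) (by simp) ((F, 0) : V × (V →ₗ[ℝ] ℝ)) (gcEta η) hΦF
      (by simp [gcEta, hηF]) ?_ ?_ ?_ L ?_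
    · intro e he
      rw [Submodule.mem_inf] at he
      exact LinearMap.mem_ker.mp he.1
    · rw [hB]; simp
    · intro e he
      rw [Submodule.mem_inf] at he
      have h2 : e.2 F = 0 := LinearMap.mem_ker.mp he.2
      rw [hB]
      simp [h2]
    · rw [h]; rfl
  · refine gc_main n hdim B hB Φ hskew F η hηF hΦF hΦη hΦ2 (-Complex.I)
      (by rw [neg_mul_neg, Complex.I_mul_I]) (by simp) ((0, η) : V × (V →ₗ[ℝ] ℝ)) (gcF F) hΦη
      (by simp [gcF, hηF]) ?_ ?_ ?_ L ?_
    · intro e he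
      rw [Submodule.mem_inf] at he
      exact LinearMap.mem_ker.mp he.2
    · rw [hB]; simp
    · intro e he
      rw [Submodule.mem_inf] at he
      have h1 : gcEta η e = 0 := LinearMap.mem_ker.mp he.1
      rw [gcEta] at h1
      rw [hB]
      simp only [LinearMap.coe_comp, Function.comp_apply, LinearMap.fst_apply] at h1
      simp [h1]
    · rw [h]
      congr 1
      rw [gcE01, gcProj01]
      congr 1
      apply LinearMap.ext
      intro v
      simp only [LinearMap.add_apply, LinearMap.sub_apply, LinearMap.smul_apply,
        LinearMap.id_apply, neg_smul, sub_neg_eq_add]
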